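/- There exist constants C > 0 and δ > 0 such that |r^flat(a) - (4/3)·a^{3/2}| ≤ C·a² for all 0 < a < δ; i.e., r^flat(a) = (4/3)a^{3/2} + O(a²) as a → 0+. -/

import Mathlib

open Real


lemma aux_nonneg (f f' : ℝ → ℝ) (hd : ∀ x, HasDerivAt f (f' x) x)
    (h0 : f 0 = 0) (hf' : ∀ x, 0 ≤ x → 0 ≤ f' x) {s : ℝ} (hs : 0 ≤ s) : 0 ≤ f s := by
  have hdiff : Differentiable ℝ f := fun x => (hd x).differentiableAt
  have mono : MonotoneOn f (Set.Ici 0) := by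
    apply monotoneOn_of_deriv_nonneg (convex_Ici 0) hdiff.continuous.continuousOn
      hdiff.differentiableOn
    intro x hx
    rw [interior_Ici] at hx
    rw [(hd x).deriv]
    exact hf' x (le_of_lt hx)
  calc (0:ℝ) = f 0 := h0.symm
    _ ≤ f s := mono (Set.self_mem_Ici) hs hs

lemma lemG {s : ℝ} (hs : 0 ≤ s) : Real.sinh s ≤ s * Real.cosh s := by
  have h := aux_nonneg (fun x => x * Real.cosh x - Real.sinh x) (fun x => x * Real.sinh x)
    (fun x => by
      have := ((hasDerivAt_id x).mul (Real.hasDerivAt_cosh x)).sub (Real.hasDerivAt_sinh x)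
      refine this.congr_deriv ?_
      simp only [id_eq]; ring)
    (by simp)
    (fun x hx => mul_nonneg hx (Real.sinh_nonneg_iff.2 hx)) hs
  simpa using h

lemma lemA {s : ℝ} (hs : 0 ≤ s) : s * Real.cosh s ≤ (1 + s^2/3) * Real.sinh s := by
  have h := aux_nonneg (fun x => (1 + x^2/3) * Real.sinh x - x * Real.cosh x)
    (fun x => x/3 * (x * Real.cosh x - Real.sinh x))
    (fun x => by
      have := (((hasDerivAt_id x).pow 2).div_const 3 |>.const_add 1 |>.mul
        (Real.hasDerivAt_sinh x)).sub ((hasDerivAt_id x).mul (Real.hasDerivAt_cosh x))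
      refine this.congr_deriv ?_
      simp only [id_eq, Pi.pow_apply]; push_cast; ring)
    (by simp)
    (fun x hx => mul_nonneg (by linarith) (by linarith [lemG hx])) hs
  simpa using h

lemma lemH1 {s : ℝ} (hs : 0 ≤ s) :
    (15*s - s^3) * Real.cosh s ≤ (15 + 4*s^2) * Real.sinh s := by
  have h := aux_nonneg (fun x => (15 + 4*x^2) * Real.sinh x - (15*x - x^3) * Real.cosh x)
    (fun x => 7*x * (x * Real.cosh x - Real.sinh x) + x^3 * Real.sinh x)
    (fun x => by
      have h1 : HasDerivAt (fun x : ℝ => 15 + 4*x^2) (8*x) x := by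
        have := ((hasDerivAt_id x).pow 2).const_mul (4:ℝ) |>.const_add 15
        refine this.congr_deriv ?_
        simp only [id_eq]; push_cast; ring
      have h2 : HasDerivAt (fun x : ℝ => 15*x - x^3) (15 - 3*x^2) x := by
        have := ((hasDerivAt_id x).const_mul (15:ℝ)).sub ((hasDerivAt_id x).pow 3)
        refine this.congr_deriv ?_
        simp only [id_eq]; push_cast; ring
      have := (h1.mul (Real.hasDerivAt_sinh x)).sub (h2.mul (Real.hasDerivAt_cosh x))
      refine this.congr_deriv ?_
      ring)
    (by simp)
    (fun x hx => by
      have h1 := Real.sinh_nonneg_iff.2 hx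
      have h2 := lemG hx
      have h3 : (0:ℝ) ≤ x^3 := by positivity
      have h4 : (0:ℝ) ≤ 7*x := by linarith
      have := mul_nonneg h4 (sub_nonneg.2 h2)
      have := mul_nonneg h3 h1
      linarith)
    hs
  simpa using h

lemma lemB {s : ℝ} (hs : 0 ≤ s) :
    (1 + s^2/3 - s^4/45) * Real.sinh s ≤ s * Real.cosh s := by
  have h := aux_nonneg (fun x => x * Real.cosh x - (1 + x^2/3 - x^4/45) * Real.sinh x)
    (fun x => x/45 * ((15 + 4*x^2) * Real.sinh x - (15*x - x^3) * Real.cosh x))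
    (fun x => by
      have h1 : HasDerivAt (fun x : ℝ => 1 + x^2/3 - x^4/45) (2*x/3 - 4*x^3/45) x := by
        have := (((hasDerivAt_id x).pow 2).div_const 3 |>.const_add 1).sub
          (((hasDerivAt_id x).pow 4).div_const 45)
        refine this.congr_deriv ?_
        simp only [id_eq]; push_cast; ring
      have := ((hasDerivAt_id x).mul (Real.hasDerivAt_cosh x)).sub
        (h1.mul (Real.hasDerivAt_sinh x))
      refine this.congr_deriv ?_
      simp only [id_eq]; ring)
    (by simp)
    (fun x hx => mul_nonneg (by linarith) (by linarith [lemH1 hx])) hs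
  simpa using h


lemma upper_bd (b s M : ℝ) (hb : 0 < b) (hb' : b < 1/2) (hs : 0 < s)
    (hM1 : s^2/3 - s^4/45 ≤ M) (hM2 : s - 1 ≤ M) :
    2*s*(b^2 - M) ≤ 4/3*b^3 + 2*b^4 := by
  rcases le_or_gt (3/2) s with h | h
  · -- a - M ≤ b² - (s-1) ≤ 1/4 - 1/2 < 0
    have h1 : b^2 - M ≤ 0 := by nlinarith
    have h2 : 2*s*(b^2 - M) ≤ 0 := by
      have := mul_nonneg (by linarith : (0:ℝ) ≤ 2*s) (by linarith : (0:ℝ) ≤ M - b^2)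
      nlinarith
    nlinarith
  · have e1 : 2*s*(b^2 - M) ≤ 2*s*b^2 - (2/3)*s^3 + (2/45)*s^5 := by
      have := mul_nonneg hs.le (sub_nonneg.mpr hM1)
      nlinarith
    rcases le_or_gt s (2*b) with h2 | h2
    · have e2 : 2*s*b^2 - (2/3)*s^3 ≤ 4/3*b^3 := by
        nlinarith [mul_nonneg (sq_nonneg (s-b)) (by linarith : (0:ℝ) ≤ s + 2*b)]
      have e3 : (2/45)*s^5 ≤ 2*b^4 := by
        have h5 : s^5 ≤ (2*b)^5 := pow_le_pow_left₀ hs.le h2 5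
        nlinarith [pow_pos hb 4, pow_pos hb 5]
      linarith
    · have hb2 : b < s/2 := by linarith
      have h4 : (s/2)^2 ≤ (s-b)^2 := by nlinarith
      have e2 : (2/45)*s^5 ≤ (2/3)*(s-b)^2*(s+2*b) := by
        have c1 : (2/3)*(s/2)^2*s ≤ (2/3)*(s-b)^2*(s+2*b) := by
          have := mul_le_mul_of_nonneg_right h4 (by linarith : (0:ℝ) ≤ s)
          nlinarith [sq_nonneg (s-b), hb.le]
        have c2 : (2/45)*s^5 ≤ (2/3)*(s/2)^2*s := by
          nlinarith [mul_nonneg (pow_pos hs 3).le (by nlinarith : (0:ℝ) ≤ 9/4 - s^2)]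
        linarith
      have e3 : 2*s*b^2 - (2/3)*s^3 + (2/3)*(s-b)^2*(s+2*b) = 4/3*b^3 := by ring
      nlinarith [pow_pos hb 4]


lemma exp_pair (σ s : ℝ) (h : σ * Real.sinh s = -s * Real.cosh s) :
    (σ + s) * Real.exp (σ + s) = (σ - s) * Real.exp (σ - s) := by
  rw [show σ - s = σ + (-s) by ring, Real.exp_add, Real.exp_add]
  rw [Real.sinh_eq, Real.cosh_eq] at h
  have hx : Real.exp s - Real.exp (-s) = Real.sinh s * 2 := by rw [Real.sinh_eq]; ring
  have h2 : σ * (Real.exp s - Real.exp (-s)) = -s * (Real.exp s + Real.exp (-s)) := by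
    linear_combination 2 * h
  linear_combination Real.exp σ * h2

lemma exp_pair' (σ s : ℝ)
    (h : (σ + s) * Real.exp (σ + s) = (σ - s) * Real.exp (σ - s)) :
    σ * Real.sinh s = -s * Real.cosh s := by
  rw [show σ - s = σ + (-s) by ring, Real.exp_add, Real.exp_add] at h
  have h2 : (σ + s) * Real.exp s = (σ - s) * Real.exp (-s) := by
    apply mul_left_cancel₀ (Real.exp_ne_zero σ)
    linear_combination h
  rw [Real.sinh_eq, Real.cosh_eq]
  linear_combination h2 / 2

lemma gInjOn : Set.InjOn (fun x : ℝ => x * Real.exp x) (Set.Ici (-1)) := by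
  have : StrictMonoOn (fun x : ℝ => x * Real.exp x) (Set.Ici (-1)) := by
    apply strictMonoOn_of_deriv_pos (convex_Ici (-1))
    · exact (continuous_id.mul Real.continuous_exp).continuousOn
    · intro x hx
      rw [interior_Ici, Set.mem_Ioi] at hx
      have hd : HasDerivAt (fun x : ℝ => x * Real.exp x) ((1 + x) * Real.exp x) x := by
        have := (hasDerivAt_id x).mul (Real.hasDerivAt_exp x)
        refine this.congr_deriv ?_
        simp only [id_eq]; ring
      rw [hd.deriv]
      have := Real.exp_pos x
      nlinarith
  exact this.injOn

set_option maxHeartbeats 1600000 in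
theorem stmt_12 (φ : ℝ → ℝ)
    (hφ : ∀ z : ℝ, z < -1 → φ z ∈ Set.Ioo (-1 : ℝ) 0 ∧ φ z * Real.exp (φ z) = z * Real.exp z)
    (rFlat : ℝ → ℝ)
    (hr : ∀ a : ℝ, 0 < a →
      IsGreatest ((fun z => (φ z - z) * ((z + φ z) / 2 + 1 + a)) '' Set.Iio (-1 : ℝ)) (rFlat a)) :
    ∃ C > (0 : ℝ), ∃ δ > (0 : ℝ), ∀ a : ℝ, 0 < a → a < δ →
      |rFlat a - 4 / 3 * a ^ ((3 : ℝ) / 2)| ≤ C * a ^ 2 := by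
  refine ⟨2, by norm_num, 1/4, by norm_num, ?_⟩
  intro a ha haδ
  obtain ⟨hmem, hub⟩ := hr a ha
  obtain ⟨z, hz, hfz⟩ := hmem
  simp only [Set.mem_Iio] at hz
  set b := Real.sqrt a with hbdef
  clear_value b
  have hb : 0 < b := hbdef ▸ Real.sqrt_pos.2 ha
  have hab : b^2 = a := hbdef ▸ Real.sq_sqrt ha.le
  have hb' : b < 1/2 := by nlinarith
  have hpow : a ^ ((3:ℝ)/2) = b^3 := by
    rw [show (3:ℝ)/2 = 1 + 1/2 by norm_num, Real.rpow_add ha, Real.rpow_one,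
      ← Real.sqrt_eq_rpow, ← hbdef, ← hab]
    ring
  -- upper bound
  obtain ⟨hwmem, hweq⟩ := hφ z hz
  set w := φ z with hwdef
  have hfz' : (w - z) * ((z + w) / 2 + 1 + a) = rFlat a := hfz
  clear_value w
  set s := (w - z)/2 with hs_def
  clear_value s
  have hs : 0 < s := by
    have h1 := hwmem.1
    rw [hs_def]; linarith
  have hsinh : 0 < Real.sinh s := Real.sinh_pos_iff.2 hs
  have hσ : (z + w)/2 * Real.sinh s = -s * Real.cosh s := by
    apply exp_pair' ((z + w)/2) s
    have e1 : (z + w)/2 + s = w := by rw [hs_def]; ring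
    have e2 : (z + w)/2 - s = z := by rw [hs_def]; ring
    rw [e1, e2]; exact hweq
  set M := s * Real.cosh s / Real.sinh s - 1 with hM_def
  clear_value M
  have hσ' : (z + w)/2 = -(M + 1) := by
    have h1 : (z + w)/2 = (-s * Real.cosh s) / Real.sinh s := (eq_div_iff hsinh.ne').mpr hσ
    rw [hM_def, h1]; ring
  have hM1 : s^2/3 - s^4/45 ≤ M := by
    rw [hM_def, le_sub_iff_add_le, le_div_iff₀ hsinh]
    nlinarith [lemB hs.le]
  have hM2 : s - 1 ≤ M := by
    rw [hM_def, sub_le_sub_iff_right, le_div_iff₀ hsinh]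
    have hcs : Real.sinh s ≤ Real.cosh s := by
      rw [Real.sinh_eq, Real.cosh_eq]
      have := Real.exp_pos (-s); linarith
    nlinarith
  have hup : rFlat a ≤ 4/3*b^3 + 2*b^4 := by
    rw [← hfz']
    have hval : (w - z) * ((z + w)/2 + 1 + a) = 2*s*(b^2 - M) := by
      rw [hσ', ← hab, hs_def]; ring
    calc (w - z) * ((z + w)/2 + 1 + a) = 2*s*(b^2 - M) := hval
      _ ≤ 4/3*b^3 + 2*b^4 := upper_bd b s M hb hb' hs hM1 hM2
  -- lower bound
  have hsinhb : 0 < Real.sinh b := Real.sinh_pos_iff.2 hb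
  set σ₀ := -b * Real.cosh b / Real.sinh b with hσ₀
  clear_value σ₀
  have hσ₀sinh : σ₀ * Real.sinh b = -b * Real.cosh b := by
    rw [hσ₀]; field_simp
  set z₀ := σ₀ - b with hz₀def
  clear_value z₀
  set w₀ := σ₀ + b with hw₀def
  clear_value w₀
  have hgz : w₀ * Real.exp w₀ = z₀ * Real.exp z₀ := by
    have := exp_pair σ₀ b hσ₀sinh
    rw [hz₀def, hw₀def]; exact this
  have hσ₀le : σ₀ ≤ -1 := by
    rw [hσ₀, div_le_iff₀ hsinhb]
    linarith [lemG hb.le]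
  have hz₀ : z₀ < -1 := by rw [hz₀def]; linarith
  have hcsb : Real.sinh b < Real.cosh b := by
    rw [Real.sinh_eq, Real.cosh_eq]
    have := Real.exp_pos (-b); linarith
  have hw₀mem : w₀ ∈ Set.Ioo (-1:ℝ) 0 := by
    constructor
    · have key : b * Real.cosh b < (b + 1) * Real.sinh b := by
        rw [Real.sinh_eq, Real.cosh_eq]
        have h2 : 2*b + 1 < Real.exp (2*b) := by
          have := Real.add_one_lt_exp (x := 2*b) (by positivity)
          linarith
        have h3 : Real.exp (2*b) = Real.exp b * Real.exp b := by
          rw [← Real.exp_add]; ring_nf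
        have h4 : 0 < Real.exp (-b) := Real.exp_pos _
        have h5 : Real.exp b * Real.exp (-b) = 1 := by
          rw [← Real.exp_add]; simp
        have h6 : (2*b+1) * Real.exp (-b) < Real.exp b := by
          calc (2*b+1) * Real.exp (-b) < Real.exp (2*b) * Real.exp (-b) :=
                mul_lt_mul_of_pos_right h2 h4
            _ = Real.exp b := by rw [h3, mul_assoc, h5, mul_one]
        linarith
      rw [hw₀def, hσ₀]
      have h6 : (-1 - b) * Real.sinh b < -b * Real.cosh b := by nlinarith
      have h7 : -1 - b < -b * Real.cosh b / Real.sinh b := by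
        rw [lt_div_iff₀ hsinhb]; exact h6
      linarith
    · rw [hw₀def, hσ₀]
      have h6 : b * Real.sinh b < b * Real.cosh b := by exact mul_lt_mul_of_pos_left hcsb hb
      have h7 : b < b * Real.cosh b / Real.sinh b := by
        rw [lt_div_iff₀ hsinhb]; exact h6
      have h8 : -b * Real.cosh b / Real.sinh b = -(b * Real.cosh b / Real.sinh b) := by ring
      rw [h8]; linarith
  have hφz₀ : φ z₀ = w₀ := by
    obtain ⟨hm, he⟩ := hφ z₀ hz₀
    have m1 : φ z₀ ∈ Set.Ici (-1:ℝ) := le_of_lt hm.1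
    have m2 : w₀ ∈ Set.Ici (-1:ℝ) := le_of_lt hw₀mem.1
    exact gInjOn m1 m2 (he.trans hgz.symm)
  have hlow : 4/3*b^3 ≤ rFlat a := by
    have h1 : (φ z₀ - z₀) * ((z₀ + φ z₀)/2 + 1 + a) ≤ rFlat a :=
      hub ⟨z₀, hz₀, rfl⟩
    rw [hφz₀] at h1
    have hMle : b * Real.cosh b / Real.sinh b - 1 ≤ b^2/3 := by
      rw [sub_le_iff_le_add, div_le_iff₀ hsinhb]
      nlinarith [lemA hb.le]
    have hval : (w₀ - z₀) * ((z₀ + w₀)/2 + 1 + a) =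
        2*b*(b^2 - (b * Real.cosh b / Real.sinh b - 1)) := by
      rw [hz₀def, hw₀def, hσ₀, ← hab]; ring
    rw [hval] at h1
    nlinarith [mul_nonneg (by linarith : (0:ℝ) ≤ 2*b)
      (sub_nonneg.2 hMle)]
  rw [hpow, abs_le]
  have hba : b^4 = a^2 := by rw [← hab]; ring
  constructor
  · nlinarith [sq_nonneg a]
  · linarith
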